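/- Convergence of FLAG (Theorem 1): Let F : ℝ^d → ℝ be differentiable with ν-Lipschitz gradient and bounded below by F* = F(θ*), let N, B, b, T be positive integers, σ, C ≥ 0, and 0 < η ≤ 1/ν. Let θ₀ ∈ ℝ^d be deterministic and let (θ_t)_{t=0}^{T} and (G_t)_{t=0}^{T−1} be random vectors in ℝ^d on a probability space, with F(θ_t), ‖∇F(θ_t)‖² and ‖G_t‖² integrable, satisfying the update θ_{t+1} = θ_t − (η/N)·G_t almost surely and, for each t: E[⟨∇F(θ_t), G_t⟩] = N·E[‖∇F(θ_t)‖²] and E[‖G_t‖²] ≤ N²·E[‖∇F(θ_t)‖²] + N·σ²/B + d·N·C²/2^{2b}. Then (1/T)·Σ_{t=0}^{T−1} E[‖∇F(θ_t)‖²] ≤ 2·(F(θ₀) − F*)/(T·η) + σ²/(N·B) + d·C²/(N·2^{2b}). -/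

import Mathlib

open MeasureTheory

lemma flag_descent {E : Type*} [NormedAddCommGroup E] [InnerProductSpace ℝ E]
    [CompleteSpace E] (F : E → ℝ) (ν : ℝ) (hF : Differentiable ℝ F)
    (hlip : ∀ x y, ‖gradient F x - gradient F y‖ ≤ ν * ‖x - y‖) (x y : E) :
    F y ≤ F x + inner ℝ (gradient F x) (y - x) + ν / 2 * ‖y - x‖ ^ 2 := by
  set v := y - x with hv
  set g : ℝ → ℝ := fun s =>
    F (x + s • v) - s * inner ℝ (gradient F x) v - ν / 2 * s ^ 2 * ‖v‖ ^ 2 with hg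
  have hline : ∀ s : ℝ, HasDerivAt (fun s : ℝ => x + s • v) v s := by
    intro s
    simpa using ((hasDerivAt_id s).smul_const v).const_add x
  have hFd : ∀ s : ℝ, HasDerivAt (fun s : ℝ => F (x + s • v))
      (inner ℝ (gradient F (x + s • v)) v : ℝ) s := by
    intro s
    have h1 := hasGradientAt_iff_hasFDerivAt.mp (hF (x + s • v)).hasGradientAt
    have := h1.comp_hasDerivAt s (hline s)
    refine this.congr_deriv ?_
    simp [InnerProductSpace.toDual_apply_apply]
  have hgd : ∀ s : ℝ, HasDerivAt g
      ((inner ℝ (gradient F (x + s • v)) v : ℝ) - inner ℝ (gradient F x) v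
        - ν * s * ‖v‖ ^ 2) s := by
    intro s
    have h2 : HasDerivAt (fun s : ℝ => s * (inner ℝ (gradient F x) v : ℝ))
        (inner ℝ (gradient F x) v : ℝ) s := by
      simpa using (hasDerivAt_id s).mul_const (inner ℝ (gradient F x) v : ℝ)
    have h3 : HasDerivAt (fun s : ℝ => ν / 2 * s ^ 2 * ‖v‖ ^ 2)
        (ν * s * ‖v‖ ^ 2) s := by
      have := ((hasDerivAt_pow 2 s).const_mul (ν / 2)).mul_const (‖v‖ ^ 2)
      refine this.congr_deriv ?_
      ring
    exact ((hFd s).sub h2).sub h3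
  have hderiv : ∀ s : ℝ, deriv g s =
      (inner ℝ (gradient F (x + s • v)) v : ℝ) - inner ℝ (gradient F x) v
        - ν * s * ‖v‖ ^ 2 := fun s => (hgd s).deriv
  have hanti : AntitoneOn g (Set.Icc (0:ℝ) 1) := by
    apply antitoneOn_of_deriv_nonpos (convex_Icc 0 1)
    · exact fun s _ => (hgd s).continuousAt.continuousWithinAt
    · exact fun s _ => (hgd s).differentiableAt.differentiableWithinAt
    · intro s hs
      rw [interior_Icc] at hs
      rw [hderiv]
      have h4 : (inner ℝ (gradient F (x + s • v)) v : ℝ) - inner ℝ (gradient F x) v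
          = inner ℝ (gradient F (x + s • v) - gradient F x) v := by
        rw [inner_sub_left]
      rw [h4]
      have h5 : (inner ℝ (gradient F (x + s • v) - gradient F x) v : ℝ)
          ≤ ‖gradient F (x + s • v) - gradient F x‖ * ‖v‖ := real_inner_le_norm _ _
      have h6 : ‖gradient F (x + s • v) - gradient F x‖ ≤ ν * (s * ‖v‖) := by
        have := hlip (x + s • v) x
        simpa [norm_smul, abs_of_nonneg hs.1.le] using this
      nlinarith [norm_nonneg v, mul_le_mul_of_nonneg_right h6 (norm_nonneg v)]
  have h01 := hanti (Set.mem_Icc.mpr ⟨le_refl 0, zero_le_one⟩)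
    (Set.mem_Icc.mpr ⟨zero_le_one, le_refl 1⟩) zero_le_one
  have hg0 : g 0 = F x := by simp [hg]
  have hg1 : g 1 = F y - inner ℝ (gradient F x) v - ν / 2 * ‖v‖ ^ 2 := by
    simp [hg, hv]
  rw [hg0, hg1] at h01
  linarith

theorem flag_convergence {Ω : Type*} [MeasurableSpace Ω]
    (μ : Measure Ω) [IsProbabilityMeasure μ]
    (d : ℕ) (F : EuclideanSpace ℝ (Fin d) → ℝ) (ν : ℝ) (hν : 0 < ν)
    (hF : Differentiable ℝ F)
    (hlip : ∀ x y, ‖gradient F x - gradient F y‖ ≤ ν * ‖x - y‖)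
    (θstar : EuclideanSpace ℝ (Fin d)) (hbelow : ∀ x, F θstar ≤ F x)
    (N B b T : ℕ) (hN : 0 < N) (hB : 0 < B) (hb : 0 < b) (hT : 0 < T)
    (σ C : ℝ) (hσ : 0 ≤ σ) (hC : 0 ≤ C) (η : ℝ) (hη : 0 < η) (hην : η ≤ 1 / ν)
    (θ₀ : EuclideanSpace ℝ (Fin d))
    (θ G : ℕ → Ω → EuclideanSpace ℝ (Fin d))
    (hθ₀ : ∀ ω, θ 0 ω = θ₀)
    (hupdate : ∀ t < T, ∀ᵐ ω ∂μ, θ (t + 1) ω = θ t ω - (η / N) • G t ω)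
    (hFint : ∀ t ≤ T, Integrable (fun ω => F (θ t ω)) μ)
    (hgradint : ∀ t < T, Integrable (fun ω => ‖gradient F (θ t ω)‖ ^ 2) μ)
    (hGint : ∀ t < T, Integrable (fun ω => ‖G t ω‖ ^ 2) μ)
    (hmean : ∀ t < T,
      ∫ ω, (inner ℝ (gradient F (θ t ω)) (G t ω) : ℝ) ∂μ
        = N * ∫ ω, ‖gradient F (θ t ω)‖ ^ 2 ∂μ)
    (hsecond : ∀ t < T,
      ∫ ω, ‖G t ω‖ ^ 2 ∂μ
        ≤ (N : ℝ) ^ 2 * (∫ ω, ‖gradient F (θ t ω)‖ ^ 2 ∂μ)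
          + N * σ ^ 2 / B + d * N * C ^ 2 / 2 ^ (2 * b)) :
    (1 / T : ℝ) * ∑ t ∈ Finset.range T, ∫ ω, ‖gradient F (θ t ω)‖ ^ 2 ∂μ
      ≤ 2 * (F θ₀ - F θstar) / (T * η) + σ ^ 2 / (N * B)
        + d * C ^ 2 / (N * 2 ^ (2 * b)) := by
  have hNpos : (0:ℝ) < N := by exact_mod_cast hN
  have hBpos : (0:ℝ) < B := by exact_mod_cast hB
  have hTpos : (0:ℝ) < T := by exact_mod_cast hT
  have hνη : ν * η ≤ 1 := by
    rw [le_div_iff₀ hν] at hην; linarith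
  set P : ℝ := 2 ^ (2 * b) with hP
  have hPpos : (0:ℝ) < P := by rw [hP]; positivity
  set K : ℝ := σ ^ 2 / (N * B) + d * C ^ 2 / (N * P) with hK
  have hKnonneg : 0 ≤ K := by positivity
  set gI : ℕ → ℝ := fun t => ∫ ω, ‖gradient F (θ t ω)‖ ^ 2 ∂μ with hgI
  set FI : ℕ → ℝ := fun t => ∫ ω, F (θ t ω) ∂μ with hFI
  have hgInonneg : ∀ t, 0 ≤ gI t := fun t => integral_nonneg (fun ω => by positivity)
  -- per-step inequality
  have key : ∀ t < T, FI (t + 1) ≤ FI t - η / 2 * gI t + η / 2 * K := by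
    intro t ht
    set φ : Ω → ℝ := fun ω => inner ℝ (gradient F (θ t ω)) (G t ω) with hφ
    have hφint : Integrable φ μ := by
      by_cases h : Integrable φ μ
      · exact h
      · exfalso
        have h0 : ∫ ω, φ ω ∂μ = 0 := integral_undef h
        have h1 := hmean t ht
        rw [show (∫ ω, (inner ℝ (gradient F (θ t ω)) (G t ω) : ℝ) ∂μ) = ∫ ω, φ ω ∂μ from rfl,
          h0] at h1
        have hg0 : gI t = 0 :=
          (mul_eq_zero.mp h1.symm).resolve_left (ne_of_gt hNpos)
        have hzero : (fun ω => ‖gradient F (θ t ω)‖ ^ 2) =ᵐ[μ] 0 := by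
          rw [← integral_eq_zero_iff_of_nonneg (fun ω => by positivity) (hgradint t ht)]
          exact hg0
        have hφzero : φ =ᵐ[μ] 0 := by
          filter_upwards [hzero] with ω hω
          have : ‖gradient F (θ t ω)‖ ^ 2 = 0 := hω
          have hgr : gradient F (θ t ω) = 0 := by
            rwa [pow_eq_zero_iff (by norm_num), norm_eq_zero] at this
          simp only [hφ, hgr, inner_zero_left, Pi.zero_apply]
        exact h ((integrable_zero _ _ _).congr hφzero.symm)
    have hae : ∀ᵐ ω ∂μ, F (θ (t+1) ω)
        ≤ F (θ t ω) - (η / N) * φ ω + ν / 2 * (η / N) ^ 2 * ‖G t ω‖ ^ 2 := by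
      filter_upwards [hupdate t ht] with ω hω
      have hd := flag_descent F ν hF hlip (θ t ω) (θ (t+1) ω)
      have hsub : θ (t+1) ω - θ t ω = -((η / N) • G t ω) := by
        rw [hω]; abel
      rw [hsub] at hd
      have hinner : (inner ℝ (gradient F (θ t ω)) (-((η / N) • G t ω)) : ℝ)
          = -((η / N) * φ ω) := by
        rw [inner_neg_right, real_inner_smul_right]
      have hnorm : ‖-((η / N) • G t ω)‖ ^ 2 = (η / N) ^ 2 * ‖G t ω‖ ^ 2 := by
        rw [norm_neg, norm_smul, mul_pow, Real.norm_eq_abs, sq_abs]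
      rw [hinner, hnorm] at hd
      linarith
    have hint1 : Integrable (fun ω => F (θ t ω) - (η / N) * φ ω) μ :=
      (hFint t (le_of_lt ht)).sub (hφint.const_mul _)
    have hint2 : Integrable (fun ω => ν / 2 * (η / N) ^ 2 * ‖G t ω‖ ^ 2) μ :=
      (hGint t ht).const_mul _
    have hRHSint : Integrable (fun ω => F (θ t ω) - (η / N) * φ ω
        + ν / 2 * (η / N) ^ 2 * ‖G t ω‖ ^ 2) μ := hint1.add hint2
    have hstep := integral_mono_ae (hFint (t+1) ht) hRHSint hae
    rw [integral_add hint1 hint2,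
      integral_sub (hFint t (le_of_lt ht)) (hφint.const_mul _),
      integral_const_mul, integral_const_mul] at hstep
    have hm : ∫ ω, φ ω ∂μ = N * gI t := hmean t ht
    rw [hm] at hstep
    have hs := hsecond t ht
    have hcoef : (0:ℝ) ≤ ν / 2 * (η / N) ^ 2 := by positivity
    have hstep2 : FI (t+1) ≤ FI t - (η / N) * (N * gI t)
        + ν / 2 * (η / N) ^ 2 * ((N:ℝ) ^ 2 * gI t + N * σ ^ 2 / B
          + d * N * C ^ 2 / 2 ^ (2 * b)) :=
      le_trans hstep (by linarith [mul_le_mul_of_nonneg_left hs hcoef])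
    have hNne : (N:ℝ) ≠ 0 := ne_of_gt hNpos
    have e1 : (η / N) * (N * gI t) = η * gI t := by
      field_simp
    have e2 : ν / 2 * (η / N) ^ 2 * ((N:ℝ) ^ 2 * gI t + N * σ ^ 2 / B
        + d * N * C ^ 2 / P)
        = ν * η / 2 * (η * gI t) + ν * η / 2 * (η * (σ ^ 2 / (N * B)))
          + ν * η / 2 * (η * (d * C ^ 2 / (N * P))) := by
      field_simp
    rw [e1, e2] at hstep2
    have bound : ∀ z : ℝ, 0 ≤ z → ν * η / 2 * (η * z) ≤ η / 2 * z := by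
      intro z hz
      have hz2 : (0:ℝ) ≤ η * z * (1/2) :=
        mul_nonneg (mul_nonneg hη.le hz) (by norm_num)
      calc ν * η / 2 * (η * z) = ν * η * (η * z * (1/2)) := by ring
        _ ≤ 1 * (η * z * (1/2)) := mul_le_mul_of_nonneg_right hνη hz2
        _ = η / 2 * z := by ring
    have b1 : ν * η / 2 * (η * gI t) ≤ η / 2 * gI t := bound _ (hgInonneg t)
    have b2 : ν * η / 2 * (η * (σ ^ 2 / (N * B))) ≤ η / 2 * (σ ^ 2 / (N * B)) :=
      bound _ (by positivity)
    have b3 : ν * η / 2 * (η * (d * C ^ 2 / (N * P)))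
        ≤ η / 2 * (d * C ^ 2 / (N * P)) := bound _ (by positivity)
    have : FI (t+1) ≤ FI t - η * gI t + η / 2 * gI t + η / 2 * (σ ^ 2 / (N * B))
        + η / 2 * (d * C ^ 2 / (N * P)) := by linarith
    rw [hK]; linarith
  -- telescoping
  have tel : ∀ t, t ≤ T → FI t ≤ FI 0 - η / 2 * (∑ s ∈ Finset.range t, gI s)
      + t * (η / 2 * K) := by
    intro t
    induction t with
    | zero => intro _; simp
    | succ n ih =>
      intro hn
      have hn' : n < T := Nat.lt_of_succ_le hn
      have h1 := ih (le_of_lt hn')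
      have h2 := key n hn'
      rw [Finset.sum_range_succ]
      push_cast
      linarith
  have hFI0 : FI 0 = F θ₀ := by
    have : (fun ω => F (θ 0 ω)) = fun _ => F θ₀ := by
      funext ω; rw [hθ₀]
    rw [hFI]; simp only [this, integral_const, measure_univ, ENNReal.toReal_one, probReal_univ, smul_eq_mul,
      one_mul]
  have hFIT : F θstar ≤ FI T := by
    have := integral_mono (integrable_const (F θstar)) (hFint T le_rfl)
      (fun ω => hbelow (θ T ω))
    simpa using this
  have hmain := tel T le_rfl
  rw [hFI0] at hmain
  -- F θstar ≤ F θ₀ - η/2 * S + T * η/2 * K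
  set S : ℝ := ∑ s ∈ Finset.range T, gI s with hS
  have hSb : η / 2 * S ≤ F θ₀ - F θstar + T * (η / 2 * K) := by linarith
  have hgoal : (1 / T : ℝ) * S ≤ 2 * (F θ₀ - F θstar) / (T * η) + K := by
    have hne1 : (T:ℝ) ≠ 0 := ne_of_gt hTpos
    have hne2 : η ≠ 0 := ne_of_gt hη
    have h1 : (1 / T : ℝ) * S = (2 / (T * η)) * (η / 2 * S) := by
      field_simp
    have h2 : (2 / (T * η)) * (η / 2 * S)
        ≤ (2 / (T * η)) * (F θ₀ - F θstar + T * (η / 2 * K)) :=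
      mul_le_mul_of_nonneg_left hSb (by positivity)
    have h3 : (2 / (T * η)) * (F θ₀ - F θstar + T * (η / 2 * K))
        = 2 * (F θ₀ - F θstar) / (T * η) + K := by
      field_simp
    linarith
  calc (1 / T : ℝ) * S ≤ 2 * (F θ₀ - F θstar) / (T * η) + K := hgoal
    _ = _ := by rw [hK]; ring
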